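/- For r ≥ 1 odd, the polynomial H(X,Y) = Σ_{0<j<r} C(r,j) X^{r-j} Y^j over F̄₂ equals ((1 0;1 1)·X^r) - X^r - ((0 1;1 0)·X^r) and hence lies in the GL₂(F₂)-submodule of V_r generated by X^r; moreover all six elements of GL₂(F₂) fix the image of H in V_r^{(1)}/V_r^{(2)}. -/
import Mathlib


open MvPolynomial

/-- The algebraic closure of `F₂`. -/
noncomputable abbrev Fbar2 : Type := AlgebraicClosure (ZMod 2)

/-- The action of a matrix `(a b; c d)` over `F₂` on polynomials in two variables
over `F̄₂`, given by `f(X,Y) ↦ f(aX + cY, bX + dY)`. -/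
noncomputable def matAct (g : Matrix (Fin 2) (Fin 2) (ZMod 2)) :
    MvPolynomial (Fin 2) Fbar2 →ₐ[Fbar2] MvPolynomial (Fin 2) Fbar2 :=
  aeval (fun j : Fin 2 => ∑ i : Fin 2,
    C (algebraMap (ZMod 2) Fbar2 (g i j)) * X i)

/-- `H(X,Y) = Σ_{0 < j < r} C(r,j) X^(r-j) Y^j` over `F̄₂`. -/
noncomputable def Hbar (r : ℕ) : MvPolynomial (Fin 2) Fbar2 :=
  ∑ j ∈ Finset.Ioo 0 r, C ((r.choose j : Fbar2)) * X 0 ^ (r - j) * X 1 ^ j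

lemma matAct_X (g : Matrix (Fin 2) (Fin 2) (ZMod 2)) (j : Fin 2) :
    matAct g (X j) = C (algebraMap (ZMod 2) Fbar2 (g 0 j)) * X 0
      + C (algebraMap (ZMod 2) Fbar2 (g 1 j)) * X 1 := by
  simp [matAct, Fin.sum_univ_two]

lemma two_eq_zero' : (2 : MvPolynomial (Fin 2) Fbar2) = 0 := by
  exact_mod_cast CharP.cast_eq_zero (MvPolynomial (Fin 2) Fbar2) 2

lemma hH (r : ℕ) (hr : 1 ≤ r) :
    Hbar r = (X 0 + X 1 : MvPolynomial (Fin 2) Fbar2) ^ r + X 0 ^ r + X 1 ^ r := by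
  have h2 := two_eq_zero'
  rw [add_comm (X 0 : MvPolynomial (Fin 2) Fbar2) (X 1), add_pow]
  have hset : Finset.range (r+1) = insert 0 (insert r (Finset.Ioo 0 r)) := by
    ext k; simp [Finset.mem_Ioo]; omega
  rw [hset, Finset.sum_insert (by simp [Finset.mem_Ioo]; omega),
    Finset.sum_insert (by simp [Finset.mem_Ioo])]
  have : ∑ k ∈ Finset.Ioo 0 r, (X 1 : MvPolynomial (Fin 2) Fbar2) ^ k * X 0 ^ (r - k) * (r.choose k : MvPolynomial (Fin 2) Fbar2)
      = Hbar r := by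
    unfold Hbar
    refine Finset.sum_congr rfl fun k hk => ?_
    rw [show ((r.choose k : ℕ) : MvPolynomial (Fin 2) Fbar2) = C ((r.choose k : Fbar2)) from (map_natCast MvPolynomial.C (r.choose k)).symm]
    ring
  rw [this]
  simp [Nat.sub_self]
  linear_combination (-(X 0:MvPolynomial (Fin 2) Fbar2)^r - (X 1:MvPolynomial (Fin 2) Fbar2)^r) * h2

lemma fixmat (r : ℕ) (hr : 1 ≤ r) (N : Matrix (Fin 2) (Fin 2) (ZMod 2))
    (u v : MvPolynomial (Fin 2) Fbar2)
    (hu : matAct N (X 0) = u) (hv : matAct N (X 1) = v)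
    (h : (u + v) ^ r + u ^ r + v ^ r = (X 0 + X 1)^r + X 0^r + X 1^r) :
    matAct N (Hbar r) = Hbar r := by
  rw [hH r hr, map_add, map_add, map_pow, map_pow, map_pow, map_add, hu, hv, h, ← hH r hr]

lemma fix1 (r : ℕ) (hr : 1 ≤ r) : matAct !![1,0;0,1] (Hbar r) = Hbar r :=
  fixmat r hr _ (X 0) (X 1) (by simp [matAct_X]) (by simp [matAct_X]) (by ring)
lemma fix2 (r : ℕ) (hr : 1 ≤ r) : matAct !![1,0;1,1] (Hbar r) = Hbar r :=
  fixmat r hr _ (X 0 + X 1) (X 1) (by simp [matAct_X]) (by simp [matAct_X]) (by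
    rw [show (X 0 + X 1 + X 1 : MvPolynomial (Fin 2) Fbar2) = X 0 from by
      linear_combination (X 1 : MvPolynomial (Fin 2) Fbar2) * two_eq_zero']; ring)
lemma fix3 (r : ℕ) (hr : 1 ≤ r) : matAct !![1,1;0,1] (Hbar r) = Hbar r :=
  fixmat r hr _ (X 0) (X 0 + X 1) (by simp [matAct_X]) (by simp [matAct_X]) (by
    rw [show (X 0 + (X 0 + X 1) : MvPolynomial (Fin 2) Fbar2) = X 1 from by
      linear_combination (X 0 : MvPolynomial (Fin 2) Fbar2) * two_eq_zero']; ring)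
lemma fix4 (r : ℕ) (hr : 1 ≤ r) : matAct !![0,1;1,0] (Hbar r) = Hbar r :=
  fixmat r hr _ (X 1) (X 0) (by simp [matAct_X]) (by simp [matAct_X]) (by ring)
lemma fix5 (r : ℕ) (hr : 1 ≤ r) : matAct !![0,1;1,1] (Hbar r) = Hbar r :=
  fixmat r hr _ (X 1) (X 0 + X 1) (by simp [matAct_X]) (by simp [matAct_X]) (by
    rw [show (X 1 + (X 0 + X 1) : MvPolynomial (Fin 2) Fbar2) = X 0 from by
      linear_combination (X 1 : MvPolynomial (Fin 2) Fbar2) * two_eq_zero']; ring)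
lemma fix6 (r : ℕ) (hr : 1 ≤ r) : matAct !![1,1;1,0] (Hbar r) = Hbar r :=
  fixmat r hr _ (X 0 + X 1) (X 0) (by simp [matAct_X]) (by simp [matAct_X]) (by
    rw [show (X 0 + X 1 + X 0 : MvPolynomial (Fin 2) Fbar2) = X 1 from by
      linear_combination (X 0 : MvPolynomial (Fin 2) Fbar2) * two_eq_zero']; ring)

lemma matAct_fix (r : ℕ) (hr : 1 ≤ r) (g : GL (Fin 2) (ZMod 2)) :
    matAct (g : Matrix (Fin 2) (Fin 2) (ZMod 2)) (Hbar r) = Hbar r := by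
  set M : Matrix (Fin 2) (Fin 2) (ZMod 2) := (g : Matrix (Fin 2) (Fin 2) (ZMod 2)) with hM
  have hdet : IsUnit M.det := (Matrix.isUnit_iff_isUnit_det M).mp g.isUnit
  have hz : ∀ x : ZMod 2, x = 0 ∨ x = 1 := by decide
  have hdet1 : M.det = 1 := by
    rcases hz M.det with h|h
    · exact absurd (h ▸ hdet) (by decide)
    · exact h
  rw [Matrix.eta_fin_two M] at hdet1 ⊢
  rw [Matrix.det_fin_two_of] at hdet1
  rcases hz (M 0 0) with h|h <;> rcases hz (M 0 1) with h'|h' <;>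
    rcases hz (M 1 0) with h''|h'' <;> rcases hz (M 1 1) with h'''|h''' <;>
    rw [h, h', h'', h'''] at hdet1 ⊢
  · exact absurd hdet1 (by decide)
  · exact absurd hdet1 (by decide)
  · exact absurd hdet1 (by decide)
  · exact absurd hdet1 (by decide)
  · exact absurd hdet1 (by decide)
  · exact absurd hdet1 (by decide)
  · exact fix4 r hr
  · exact fix5 r hr
  · exact absurd hdet1 (by decide)
  · exact fix1 r hr
  · exact absurd hdet1 (by decide)
  · exact fix2 r hr
  · exact absurd hdet1 (by decide)
  · exact fix3 r hr
  · exact fix6 r hr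
  · exact absurd hdet1 (by decide)

lemma matAct_pow_a (r : ℕ) :
    matAct !![1,0;1,1] ((X 0 : MvPolynomial (Fin 2) Fbar2) ^ r) = (X 0 + X 1) ^ r := by
  rw [map_pow]; congr 1; simp [matAct_X]

lemma matAct_pow_w (r : ℕ) :
    matAct !![0,1;1,0] ((X 0 : MvPolynomial (Fin 2) Fbar2) ^ r) = (X 1) ^ r := by
  rw [map_pow]; congr 1; simp [matAct_X]

lemma matAct_pow_id (r : ℕ) :
    matAct !![1,0;0,1] ((X 0 : MvPolynomial (Fin 2) Fbar2) ^ r) = (X 0) ^ r := by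
  rw [map_pow]; congr 1; simp [matAct_X]

/-- For `r ≥ 1` odd: `H = ((1 0;1 1)·X^r) - X^r - ((0 1;1 0)·X^r)`, hence `H` lies in
the `GL₂(F₂)`-submodule of `V_r` generated by `X^r`; moreover every element of
`GL₂(F₂)` fixes the image of `H` in `V_r^{(1)}/V_r^{(2)}`, i.e. `g·H - H ∈ θ²V_{r-6}`. -/
theorem stmt_8 (r : ℕ) (hr : 1 ≤ r) (hodd : Odd r) :
    Hbar r = matAct !![1, 0; 1, 1] (X 0 ^ r) - X 0 ^ r - matAct !![0, 1; 1, 0] (X 0 ^ r)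
    ∧ Hbar r ∈ Submodule.span Fbar2
        (Set.range fun g : GL (Fin 2) (ZMod 2) =>
          matAct (g : Matrix (Fin 2) (Fin 2) (ZMod 2)) (X 0 ^ r))
    ∧ ∀ g : GL (Fin 2) (ZMod 2), ∃ b : ℕ → Fbar2,
        matAct (g : Matrix (Fin 2) (Fin 2) (ZMod 2)) (Hbar r) - Hbar r
          = (X 0 ^ 2 * X 1 - X 0 * X 1 ^ 2) ^ 2 *
              ∑ j ∈ Finset.range (r - 6 + 1), C (b j) * X 0 ^ (r - 6 - j) * X 1 ^ j := by
  have h2 := two_eq_zero'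
  have part1 : Hbar r
      = matAct !![1, 0; 1, 1] ((X 0 : MvPolynomial (Fin 2) Fbar2) ^ r) - X 0 ^ r
        - matAct !![0, 1; 1, 0] ((X 0 : MvPolynomial (Fin 2) Fbar2) ^ r) := by
    rw [matAct_pow_a, matAct_pow_w]
    linear_combination (hH r hr) + ((X 0 : MvPolynomial (Fin 2) Fbar2)^r + (X 1 : MvPolynomial (Fin 2) Fbar2)^r) * h2
  refine ⟨part1, ?_, ?_⟩
  · rw [part1]
    have mem : ∀ g : GL (Fin 2) (ZMod 2),
        matAct (g : Matrix (Fin 2) (Fin 2) (ZMod 2)) ((X 0 : MvPolynomial (Fin 2) Fbar2) ^ r)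
          ∈ Submodule.span Fbar2 (Set.range fun g : GL (Fin 2) (ZMod 2) =>
              matAct (g : Matrix (Fin 2) (Fin 2) (ZMod 2)) (X 0 ^ r)) :=
      fun g => Submodule.subset_span (Set.mem_range_self g)
    have ha := mem ⟨!![1,0;1,1], !![1,0;1,1], by decide, by decide⟩
    have hb := mem ⟨!![1,0;0,1], !![1,0;0,1], by decide, by decide⟩
    have hc := mem ⟨!![0,1;1,0], !![0,1;1,0], by decide, by decide⟩
    rw [matAct_pow_id] at hb
    exact sub_mem (sub_mem ha hb) hc
  · intro g
    refine ⟨fun _ => 0, ?_⟩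
    rw [matAct_fix r hr g, sub_self]
    simp
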